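/- The skeleton of the Delaunay partition of the face-centered cubic lattice A₃ embeds with scale 2 into ℤ^4: on the graph with vertex set {y ∈ ℤ^4 : y₁ + y₂ + y₃ + y₄ = 0} where y is adjacent to y' iff y − y' = e_i − e_j for some i ≠ j (e_i the standard basis vectors), the graph distance d satisfies 2·d(y, y') = Σ_{i=1}^4 |y_i − y'_i| for all vertices y, y'. -/
import Mathlib


/-- The `A₃` lattice graph: vertex set `{y ∈ ℤ^4 : y₁ + y₂ + y₃ + y₄ = 0}`, with
`y` adjacent to `y'` iff `y − y' = e_i − e_j` for some `i ≠ j`. It is the skeleton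
of the octahedron–tetrahedron uniform partition `De(A₃)` of 3-space. -/
def A3Graph : SimpleGraph {y : Fin 4 → ℤ // ∑ i, y i = 0} :=
  SimpleGraph.fromRel (fun y y' =>
    ∃ i j : Fin 4, i ≠ j ∧ y.val - y'.val = Pi.single i 1 - Pi.single j 1)

lemma single_sub_abs_sum (i j : Fin 4) (h : i ≠ j) :
    ∑ k, |(Pi.single i (1:ℤ) - Pi.single j 1 : Fin 4 → ℤ) k| = 2 := by
  fin_cases i <;> fin_cases j <;> simp_all [Fin.sum_univ_four, Pi.single_apply]

lemma adj_abs_sum {y z : {y : Fin 4 → ℤ // ∑ i, y i = 0}} (h : A3Graph.Adj y z) :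
    ∑ k, |y.val k - z.val k| = 2 := by
  rw [A3Graph, SimpleGraph.fromRel_adj] at h
  obtain ⟨-, ⟨i, j, hij, he⟩ | ⟨i, j, hij, he⟩⟩ := h
  · have : ∀ k, y.val k - z.val k = (Pi.single i (1:ℤ) - Pi.single j 1 : Fin 4 → ℤ) k := by
      intro k; rw [← he]; rfl
    simp only [this]; exact single_sub_abs_sum i j hij
  · have : ∀ k, y.val k - z.val k = -((Pi.single i (1:ℤ) - Pi.single j 1 : Fin 4 → ℤ) k) := by
      intro k
      have : z.val k - y.val k = (Pi.single i (1:ℤ) - Pi.single j 1 : Fin 4 → ℤ) k := by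
        rw [← he]; rfl
      omega
    simp only [this, abs_neg]; exact single_sub_abs_sum i j hij

lemma walk_bound {y y' : {y : Fin 4 → ℤ // ∑ i, y i = 0}} (w : A3Graph.Walk y y') :
    ∑ k, |y.val k - y'.val k| ≤ 2 * (w.length : ℤ) := by
  induction w with
  | nil => simp
  | @cons a b c h p ih =>
    have tri : ∑ k, |a.val k - c.val k| ≤
        (∑ k, |a.val k - b.val k|) + ∑ k, |b.val k - c.val k| := by
      rw [← Finset.sum_add_distrib]
      exact Finset.sum_le_sum fun k _ => abs_sub_le _ _ _
    have := adj_abs_sum h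
    simp only [SimpleGraph.Walk.length_cons]
    push_cast
    omega

lemma exists_walk : ∀ (n : ℕ) (y y' : {y : Fin 4 → ℤ // ∑ i, y i = 0}),
    (∑ k, |y.val k - y'.val k|).toNat ≤ n →
    ∃ w : A3Graph.Walk y y', 2 * (w.length : ℤ) = ∑ k, |y.val k - y'.val k| := by
  intro n
  induction n with
  | zero =>
    intro y y' h
    have h0 : ∑ k, |y.val k - y'.val k| = 0 := by
      have : 0 ≤ ∑ k, |y.val k - y'.val k| :=
        Finset.sum_nonneg fun k _ => abs_nonneg _
      omega
    have : y = y' := by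
      ext k
      have := (Finset.sum_eq_zero_iff_of_nonneg (fun k _ => abs_nonneg _)).mp h0 k
        (Finset.mem_univ k)
      have := abs_eq_zero.mp this
      omega
    subst this
    exact ⟨SimpleGraph.Walk.nil, by simp [h0]⟩
  | succ n ih =>
    intro y y' h
    by_cases hyy : y = y'
    · subst hyy
      exact ⟨SimpleGraph.Walk.nil, by simp⟩
    · have hsum : ∑ k, (y.val k - y'.val k) = 0 := by
        rw [Finset.sum_sub_distrib, y.2, y'.2]; ring
      have hne : ∃ k, y.val k - y'.val k ≠ 0 := by
        by_contra hc
        push_neg at hc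
        exact hyy (Subtype.ext (funext fun k => by have := hc k; omega))
      obtain ⟨k0, hk0⟩ := hne
      have hpos : ∃ i, 0 < y.val i - y'.val i := by
        by_contra hc
        push_neg at hc
        have hk0' : y.val k0 - y'.val k0 < 0 := lt_of_le_of_ne (hc k0) hk0
        have h1 : ∑ k, (y.val k - y'.val k) < 0 := by
          have h2 : (y.val k0 - y'.val k0) + ∑ k ∈ Finset.univ.erase k0, (y.val k - y'.val k)
              = ∑ k, (y.val k - y'.val k) :=
            Finset.add_sum_erase Finset.univ (fun k => y.val k - y'.val k) (Finset.mem_univ k0)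
          have h3 : ∑ k ∈ Finset.univ.erase k0, (y.val k - y'.val k) ≤ 0 :=
            Finset.sum_nonpos fun k _ => hc k
          omega
        omega
      obtain ⟨i, hi⟩ := hpos
      have hneg : ∃ j, y.val j - y'.val j < 0 := by
        by_contra hc
        push_neg at hc
        have h1 : y.val i - y'.val i ≤ ∑ k, (y.val k - y'.val k) :=
          Finset.single_le_sum (f := fun k => y.val k - y'.val k)
            (fun j _ => hc j) (Finset.mem_univ i)
        omega
      obtain ⟨j, hj⟩ := hneg
      have hij : i ≠ j := by intro hc; rw [hc] at hi; omega
      have hzsum : ∑ k, (y.val - (Pi.single i 1 - Pi.single j 1) : Fin 4 → ℤ) k = 0 := by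
        simp only [Pi.sub_apply]
        rw [Finset.sum_sub_distrib, Finset.sum_sub_distrib, y.2,
          Finset.sum_pi_single', Finset.sum_pi_single'] <;> simp
      set z : {y : Fin 4 → ℤ // ∑ i, y i = 0} :=
        ⟨y.val - (Pi.single i 1 - Pi.single j 1), hzsum⟩ with hz
      have hzi : z.val i = y.val i - 1 := by
        simp [hz, Pi.single_apply, hij]
      have hzj : z.val j = y.val j + 1 := by
        simp [hz, Pi.single_apply, Ne.symm hij]
      have hzo : ∀ k, k ≠ i → k ≠ j → z.val k = y.val k := by
        intro k h1 h2
        simp [hz, Pi.single_apply, h1, h2]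
      have hadj : A3Graph.Adj y z := by
        rw [A3Graph, SimpleGraph.fromRel_adj]
        refine ⟨fun hc => ?_, Or.inl ⟨i, j, hij, by simp [hz]⟩⟩
        have : y.val i = z.val i := by rw [hc]
        omega
      have hstep : ∀ k, |z.val k - y'.val k| = |y.val k - y'.val k| -
          ((Pi.single i (1:ℤ) : Fin 4 → ℤ) k + (Pi.single j (1:ℤ) : Fin 4 → ℤ) k) := by
        intro k
        by_cases hki : k = i
        · subst hki
          rw [hzi]
          simp only [Pi.single_apply, if_pos rfl, if_neg hij]
          rw [abs_of_nonneg (by omega : (0:ℤ) ≤ y.val k - 1 - y'.val k),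
            abs_of_pos hi]
          simp
          ring
        · by_cases hkj : k = j
          · subst hkj
            rw [hzj]
            simp only [Pi.single_apply, if_pos rfl, if_neg hki]
            rw [abs_of_nonpos (by omega : y.val k + 1 - y'.val k ≤ 0),
              abs_of_neg hj]
            simp
            ring
          · rw [hzo k hki hkj]
            simp [Pi.single_apply, hki, hkj]
      have hsum2 : ∑ k, |z.val k - y'.val k| = (∑ k, |y.val k - y'.val k|) - 2 := by
        simp only [hstep]
        rw [Finset.sum_sub_distrib, Finset.sum_add_distrib,
          Finset.sum_pi_single', Finset.sum_pi_single']
        simp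
      have h2 : (2:ℤ) ≤ ∑ k, |y.val k - y'.val k| := by
        have hi' : 1 ≤ |y.val i - y'.val i| := by rw [abs_of_pos hi]; omega
        have hj' : 1 ≤ |y.val j - y'.val j| := by rw [abs_of_neg hj]; omega
        have h4 : |y.val i - y'.val i| + ∑ k ∈ Finset.univ.erase i, |y.val k - y'.val k|
            = ∑ k, |y.val k - y'.val k| :=
          Finset.add_sum_erase Finset.univ (fun k => |y.val k - y'.val k|) (Finset.mem_univ i)
        have hji : j ∈ Finset.univ.erase i :=
          Finset.mem_erase.mpr ⟨Ne.symm hij, Finset.mem_univ j⟩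
        have h3 : |y.val j - y'.val j| ≤ ∑ k ∈ Finset.univ.erase i, |y.val k - y'.val k| :=
          Finset.single_le_sum (f := fun k => |y.val k - y'.val k|)
            (fun k _ => abs_nonneg _) hji
        omega
      have hle : (∑ k, |z.val k - y'.val k|).toNat ≤ n := by omega
      obtain ⟨w, hw⟩ := ih z y' hle
      refine ⟨SimpleGraph.Walk.cons hadj w, ?_⟩
      simp only [SimpleGraph.Walk.length_cons]
      push_cast
      omega

/-- The skeleton of `De(A₃)` embeds with scale 2 into `ℤ^4`:
`2·d(y,y') = Σᵢ |yᵢ − y'ᵢ|`. -/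
theorem A3Graph_scale_two_embedding (y y' : {y : Fin 4 → ℤ // ∑ i, y i = 0}) :
    2 * (A3Graph.dist y y' : ℤ) = ∑ i, |y.val i - y'.val i| := by
  obtain ⟨w, hw⟩ := exists_walk (∑ k, |y.val k - y'.val k|).toNat y y' le_rfl
  have hr : A3Graph.Reachable y y' := ⟨w⟩
  obtain ⟨p, hp⟩ := hr.exists_walk_length_eq_dist
  have h1 : ∑ k, |y.val k - y'.val k| ≤ 2 * (p.length : ℤ) := walk_bound p
  have h2 : A3Graph.dist y y' ≤ w.length := SimpleGraph.dist_le w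
  rw [hp] at h1
  omega
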